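/- If q₁(t) = Σ_{j=1}^m a_j e^{-μ_j t} and q₂(t) = Σ_{j=1}^m b_j e^{-ν_j t} are finite exponential sums with positive distinct exponents and positive coefficients, and ∫₀^∞ t^{k-1} q₁(t) dt = ∫₀^∞ t^{k-1} q₂(t) dt for all positive integers k, then q₁ = q₂ as functions on (0, ∞). -/

import Mathlib

open MeasureTheory Set Finset

lemma powsum_zero : ∀ (S : Finset ℝ), (∀ x ∈ S, x ≠ 0) → ∀ (c : ℝ → ℝ),
    (∀ k : ℕ, 1 ≤ k → ∑ x ∈ S, c x * x ^ k = 0) → ∀ x ∈ S, c x = 0 := by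
  intro S
  induction S using Finset.strongInduction with
  | _ S ih =>
    intro hS c hc x₀ hx₀
    have key : ∀ y ∈ S.erase x₀, c y = 0 := by
      have hsub : ∀ k : ℕ, 1 ≤ k →
          ∑ y ∈ S.erase x₀, (fun y => c y * (y - x₀)) y * y ^ k = 0 := by
        intro k hk
        have h1 : ∑ y ∈ S, (c y * (y - x₀)) * y ^ k = 0 := by
          have e : ∀ y : ℝ, (c y * (y - x₀)) * y ^ k
              = c y * y ^ (k+1) - x₀ * (c y * y ^ k) := by
            intro y; ring
          simp only [e, Finset.sum_sub_distrib, ← Finset.mul_sum,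
            hc (k+1) (by omega), hc k hk, mul_zero, sub_zero]
        rw [Finset.sum_erase _ (by simp)]
        exact h1
      have := ih (S.erase x₀) (Finset.erase_ssubset hx₀)
        (fun y hy => hS y (Finset.mem_of_mem_erase hy)) _ hsub
      intro y hy
      have h0 := this y hy
      have hne : y - x₀ ≠ 0 := sub_ne_zero.2 (Finset.ne_of_mem_erase hy)
      exact (mul_eq_zero.1 h0).resolve_right hne
    have h1 := hc 1 le_rfl
    rw [Finset.sum_eq_single_of_mem x₀ hx₀
      (fun y hy hne => by rw [key y (Finset.mem_erase.2 ⟨hne, hy⟩), zero_mul])] at h1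
    simpa [hS x₀ hx₀] using h1

lemma intOnAux (n : ℕ) {w : ℝ} (hw : 0 < w) :
    IntegrableOn (fun t : ℝ => t ^ n * Real.exp (-w * t)) (Set.Ioi 0) := by
  have h0 : IntegrableOn (fun x : ℝ => Real.exp (-x) * x ^ ((n+1:ℝ) - 1)) (Ioi 0) :=
    Real.GammaIntegral_convergent (by positivity)
  have h1 := (integrableOn_Ioi_comp_mul_left_iff
    (fun x : ℝ => Real.exp (-x) * x ^ ((n+1:ℝ)-1)) 0 hw).2 (by simpa using h0)
  have h2 : IntegrableOn (fun x : ℝ => (w ^ (n:ℝ))⁻¹ * (Real.exp (-(w * x)) * (w * x) ^ ((n+1:ℝ)-1))) (Ioi 0) :=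
    h1.const_mul _
  refine h2.congr_fun (fun x hx => ?_) measurableSet_Ioi
  have hx0 : (0:ℝ) < x := hx
  have : ((n+1:ℝ) - 1) = (n:ℝ) := by ring
  rw [this]
  beta_reduce
  rw [Real.mul_rpow hw.le hx0.le, Real.rpow_natCast, Real.rpow_natCast, neg_mul]
  field_simp

lemma intval (k : ℕ) (hk : 1 ≤ k) {w : ℝ} (hw : 0 < w) :
    ∫ t in Set.Ioi (0:ℝ), t ^ (k-1) * Real.exp (-w * t)
      = (1/w) ^ (k:ℝ) * Real.Gamma k := by
  have hk0 : (0:ℝ) < (k:ℝ) := by exact_mod_cast hk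
  rw [← Real.integral_rpow_mul_exp_neg_mul_Ioi hk0 hw]
  refine setIntegral_congr_fun measurableSet_Ioi fun t ht => ?_
  have ht0 : (0:ℝ) < t := ht
  rw [← Real.rpow_natCast t (k-1), neg_mul]
  congr 2
  push_cast [Nat.cast_sub hk]
  ring

theorem moments_determine_heat_content (m : ℕ)
    (μ a ν b : Fin m → ℝ)
    (hμ0 : ∀ j, 0 < μ j) (hν0 : ∀ j, 0 < ν j)
    (hμ : Function.Injective μ) (hν : Function.Injective ν)
    (ha : ∀ j, 0 < a j) (hb : ∀ j, 0 < b j)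
    (q₁ q₂ : ℝ → ℝ)
    (hq₁ : ∀ t, q₁ t = ∑ j, a j * Real.exp (-μ j * t))
    (hq₂ : ∀ t, q₂ t = ∑ j, b j * Real.exp (-ν j * t))
    (hmom : ∀ k : ℕ, 1 ≤ k →
      ∫ t in Set.Ioi (0:ℝ), t ^ (k - 1) * q₁ t =
        ∫ t in Set.Ioi (0:ℝ), t ^ (k - 1) * q₂ t) :
    ∀ t : ℝ, 0 < t → q₁ t = q₂ t := by
  classical
  set r : Fin m → ℝ := fun j => (μ j)⁻¹ with hr
  set s : Fin m → ℝ := fun j => (ν j)⁻¹ with hs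
  set S : Finset ℝ := Finset.univ.image r ∪ Finset.univ.image s with hS
  set c : ℝ → ℝ := fun x =>
    (∑ j, if r j = x then a j else 0) - (∑ j, if s j = x then b j else 0) with hcdef
  have hrS : ∀ j, r j ∈ S := fun j => Finset.mem_union_left _ (Finset.mem_image_of_mem _ (Finset.mem_univ j))
  have hsS : ∀ j, s j ∈ S := fun j => Finset.mem_union_right _ (Finset.mem_image_of_mem _ (Finset.mem_univ j))
  -- representation lemma
  have hrep : ∀ g : ℝ → ℝ, ∑ x ∈ S, c x * g x
      = (∑ j, a j * g (r j)) - (∑ j, b j * g (s j)) := by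
    intro g
    have h1 : ∑ x ∈ S, (∑ j, if r j = x then a j else 0) * g x = ∑ j, a j * g (r j) := by
      calc ∑ x ∈ S, (∑ j, if r j = x then a j else 0) * g x
          = ∑ x ∈ S, ∑ j, (if r j = x then a j * g x else 0) := by
            refine Finset.sum_congr rfl fun x _ => ?_
            rw [Finset.sum_mul]
            exact Finset.sum_congr rfl fun j _ => by split <;> simp
        _ = ∑ j, ∑ x ∈ S, (if r j = x then a j * g x else 0) := Finset.sum_comm
        _ = ∑ j, a j * g (r j) := by
            refine Finset.sum_congr rfl fun j _ => ?_
            rw [Finset.sum_ite_eq S (r j) (fun x => a j * g x)]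
            simp [hrS j]
    have h2 : ∑ x ∈ S, (∑ j, if s j = x then b j else 0) * g x = ∑ j, b j * g (s j) := by
      calc ∑ x ∈ S, (∑ j, if s j = x then b j else 0) * g x
          = ∑ x ∈ S, ∑ j, (if s j = x then b j * g x else 0) := by
            refine Finset.sum_congr rfl fun x _ => ?_
            rw [Finset.sum_mul]
            exact Finset.sum_congr rfl fun j _ => by split <;> simp
        _ = ∑ j, ∑ x ∈ S, (if s j = x then b j * g x else 0) := Finset.sum_comm
        _ = ∑ j, b j * g (s j) := by
            refine Finset.sum_congr rfl fun j _ => ?_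
            rw [Finset.sum_ite_eq S (s j) (fun x => b j * g x)]
            simp [hsS j]
    simp only [hcdef, sub_mul, Finset.sum_sub_distrib, h1, h2]
  -- compute integrals
  have hmom' : ∀ k : ℕ, 1 ≤ k →
      ∑ j, a j * (r j) ^ k = ∑ j, b j * (s j) ^ k := by
    intro k hk
    have hΓ : (0:ℝ) < Real.Gamma k :=
      Real.Gamma_pos_of_pos (by exact_mod_cast hk)
    have e1 : ∫ t in Set.Ioi (0:ℝ), t ^ (k-1) * q₁ t
        = ∑ j, a j * ((1/μ j) ^ (k:ℝ) * Real.Gamma k) := by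
      rw [show (fun t => t ^ (k-1) * q₁ t) = fun t => ∑ j, a j * (t ^ (k-1) * Real.exp (-μ j * t)) from ?_]
      · rw [integral_finset_sum _ (fun j _ => ((intOnAux (k-1) (hμ0 j)).const_mul (a j)))]
        exact Finset.sum_congr rfl fun j _ => by
          rw [integral_const_mul, intval k hk (hμ0 j)]
      · funext t
        rw [hq₁ t, Finset.mul_sum]
        exact Finset.sum_congr rfl fun j _ => by ring
    have e2 : ∫ t in Set.Ioi (0:ℝ), t ^ (k-1) * q₂ t
        = ∑ j, b j * ((1/ν j) ^ (k:ℝ) * Real.Gamma k) := by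
      rw [show (fun t => t ^ (k-1) * q₂ t) = fun t => ∑ j, b j * (t ^ (k-1) * Real.exp (-ν j * t)) from ?_]
      · rw [integral_finset_sum _ (fun j _ => ((intOnAux (k-1) (hν0 j)).const_mul (b j)))]
        exact Finset.sum_congr rfl fun j _ => by
          rw [integral_const_mul, intval k hk (hν0 j)]
      · funext t
        rw [hq₂ t, Finset.mul_sum]
        exact Finset.sum_congr rfl fun j _ => by ring
    have h := hmom k hk
    rw [e1, e2] at h
    have h' : (∑ j, a j * (1/μ j) ^ (k:ℝ)) * Real.Gamma k
        = (∑ j, b j * (1/ν j) ^ (k:ℝ)) * Real.Gamma k := by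
      rw [Finset.sum_mul, Finset.sum_mul]
      simpa [mul_assoc] using h
    have h'' := mul_right_cancel₀ hΓ.ne' h'
    calc ∑ j, a j * r j ^ k = ∑ j, a j * (1/μ j) ^ (k:ℝ) := by
          refine Finset.sum_congr rfl fun j _ => ?_
          rw [Real.rpow_natCast, one_div]
      _ = ∑ j, b j * (1/ν j) ^ (k:ℝ) := h''
      _ = ∑ j, b j * s j ^ k := by
          refine Finset.sum_congr rfl fun j _ => ?_
          rw [Real.rpow_natCast, one_div]
  -- power sums of c vanish
  have hc : ∀ k : ℕ, 1 ≤ k → ∑ x ∈ S, c x * x ^ k = 0 := by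
    intro k hk
    rw [hrep (fun x => x ^ k), sub_eq_zero]
    exact hmom' k hk
  have hSne : ∀ x ∈ S, x ≠ 0 := by
    intro x hx
    rcases Finset.mem_union.1 hx with h | h <;>
      obtain ⟨j, -, rfl⟩ := Finset.mem_image.1 h
    · exact (inv_pos.2 (hμ0 j)).ne'
    · exact (inv_pos.2 (hν0 j)).ne'
  have hc0 := powsum_zero S hSne c hc
  -- conclude
  intro t ht
  have h := hrep (fun x => Real.exp (-x⁻¹ * t))
  rw [Finset.sum_eq_zero (fun x hx => by rw [hc0 x hx, zero_mul])] at h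
  have h1 : ∑ j, a j * Real.exp (-(r j)⁻¹ * t) = q₁ t := by
    rw [hq₁ t]
    exact Finset.sum_congr rfl fun j _ => by rw [hr]; simp
  have h2 : ∑ j, b j * Real.exp (-(s j)⁻¹ * t) = q₂ t := by
    rw [hq₂ t]
    exact Finset.sum_congr rfl fun j _ => by rw [hs]; simp
  have := h.symm
  rw [h1, h2] at this
  linarith [this]
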